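/- Let f_1, …, f_p : R^n → R be linear maps with p < n, and δ_1, …, δ_p > 0. Then the system of inequalities |f_s(K)| < δ_s (s = 1, …, p) has a sequence of nonzero integer solutions K_l ∈ Z^n with ‖K_l‖ → ∞ and bounded gap, i.e., ‖K_{l+1} − K_l‖ is bounded uniformly in l. Moreover, for any fixed positive integer N one can arrange that all components of every K_l are divisible by N. -/

import Mathlib

open Filter Metric Set
/-- Syndeticity of near-return times of the linear flow t ↦ t•v to the integer lattice. -/
lemma mbg_syndetic (n : ℕ) (v : Fin n → ℝ) (ε : ℝ) (hε : 0 < ε) :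
    ∃ R : ℝ, 1 ≤ R ∧ ∀ x : ℝ, 0 ≤ x → ∃ t : ℝ, ∃ m : Fin n → ℤ,
      x ≤ t ∧ t ≤ x + R ∧ ‖(fun i => t * v i - (m i : ℝ) : Fin n → ℝ)‖ < ε := by
  set F : ℝ → (Fin n → ℝ) := fun t i => Int.fract (t * v i) with hF
  have hFball : ∀ t : ℝ, F t ∈ closedBall (0 : Fin n → ℝ) 1 := by
    intro t
    rw [mem_closedBall, dist_zero_right]
    refine pi_norm_le_iff_of_nonneg (by norm_num) |>.mpr fun i => ?_
    rw [Real.norm_eq_abs, abs_le]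
    constructor
    · linarith [Int.fract_nonneg (t * v i)]
    · linarith [Int.fract_lt_one (t * v i)]
  have hΩc : IsCompact (closure (F '' (Ici (0:ℝ)))) := by
    refine (isCompact_closedBall (0 : Fin n → ℝ) 1).of_isClosed_subset isClosed_closure ?_
    refine closure_minimal ?_ isClosed_closedBall
    rintro _ ⟨t, -, rfl⟩
    exact hFball t
  have hcover : closure (F '' (Ici (0:ℝ))) ⊆
      ⋃ t : Ici (0:ℝ), ball (F t.1) (ε/2) := by
    intro ω hω
    obtain ⟨b, hb, hdist⟩ := Metric.mem_closure_iff.mp hω (ε/2) (by positivity)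
    obtain ⟨t, ht, rfl⟩ := hb
    exact mem_iUnion.mpr ⟨⟨t, ht⟩, by simpa [mem_ball, dist_comm] using hdist⟩
  obtain ⟨s, hs⟩ := hΩc.elim_finite_subcover _ (fun t => isOpen_ball) hcover
  have hsum : (0:ℝ) ≤ ∑ t ∈ s, t.1 := Finset.sum_nonneg fun t _ => t.2
  refine ⟨1 + ∑ t ∈ s, t.1, by linarith, ?_⟩
  intro x hx
  set R : ℝ := 1 + ∑ t ∈ s, t.1 with hR
  have hmem : F (x + R) ∈ ⋃ i ∈ s, ball (F i.1) (ε/2) :=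
    hs (subset_closure ⟨x + R, by simp only [mem_Ici]; linarith, rfl⟩)
  obtain ⟨ti, htis, hball⟩ := mem_iUnion₂.mp hmem
  have hti_le : ti.1 ≤ R := by
    have := Finset.single_le_sum (f := fun t : Ici (0:ℝ) => t.1)
      (fun t _ => t.2) htis
    simp only [hR]; linarith
  refine ⟨x + R - ti.1, fun j => ⌊(x+R) * v j⌋ - ⌊ti.1 * v j⌋, by linarith, by
    have := ti.2; simp only [mem_Ici] at this; linarith, ?_⟩
  have heq : (fun i => (x + R - ti.1) * v i - ((⌊(x+R) * v i⌋ - ⌊ti.1 * v i⌋ : ℤ) : ℝ)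
      : Fin n → ℝ) = F (x + R) - F ti.1 := by
    funext i
    simp only [hF, Pi.sub_apply, Int.fract]
    push_cast
    ring
  rw [heq, ← dist_eq_norm]
  calc dist (F (x+R)) (F ti.1) < ε/2 := mem_ball.mp hball
    _ < ε := by linarith

/-- A linear form on `Fin n → ℝ` is bounded by the sum of its values on basis vectors. -/
lemma mbg_form_bound (n : ℕ) (g : (Fin n → ℝ) →ₗ[ℝ] ℝ) (w : Fin n → ℝ) :
    |g w| ≤ (∑ i, |g ((Pi.single i 1 : Fin n → ℝ))|) * ‖w‖ := by
  have hw : w = ∑ i, w i • (Pi.single i 1 : Fin n → ℝ) := by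
    funext j
    simp [Finset.sum_apply, Pi.single_apply]
  calc |g w| = |∑ i, w i * g ((Pi.single i 1 : Fin n → ℝ))| := by
        conv_lhs => rw [hw]
        rw [map_sum]
        simp [map_smul, smul_eq_mul]
    _ ≤ ∑ i, |w i * g ((Pi.single i 1 : Fin n → ℝ))| := Finset.abs_sum_le_sum_abs _ _
    _ ≤ ∑ i, ‖w‖ * |g ((Pi.single i 1 : Fin n → ℝ))| := by
        refine Finset.sum_le_sum fun i _ => ?_
        rw [abs_mul]
        exact mul_le_mul_of_nonneg_right
          (by simpa [Real.norm_eq_abs] using norm_le_pi_norm w i) (abs_nonneg _)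
    _ = (∑ i, |g ((Pi.single i 1 : Fin n → ℝ))|) * ‖w‖ := by rw [← Finset.mul_sum, mul_comm]

/-- Common nonzero kernel vector for fewer than `n` linear forms on `ℝⁿ`. -/
lemma mbg_kernel_vec (n p : ℕ) (hpn : p < n) (f : Fin p → ((Fin n → ℝ) →ₗ[ℝ] ℝ)) :
    ∃ v : Fin n → ℝ, v ≠ 0 ∧ ∀ s, f s v = 0 := by
  set g : (Fin n → ℝ) →ₗ[ℝ] (Fin p → ℝ) := LinearMap.pi f with hg
  have hinj : ¬ Function.Injective g := by
    intro h
    have := LinearMap.finrank_le_finrank_of_injective h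
    rw [Module.finrank_pi, Module.finrank_pi] at this
    simp at this
    omega
  rw [← LinearMap.ker_eq_bot] at hinj
  obtain ⟨v, hv, hv0⟩ := Submodule.exists_mem_ne_zero_of_ne_bot hinj
  exact ⟨v, hv0, fun s => congrFun (LinearMap.mem_ker.mp hv) s⟩

/-- Choose a uniform positive ε below finitely many positive values. -/
lemma mbg_eps (p : ℕ) (g : Fin p → ℝ) (hg : ∀ s, 0 < g s) :
    ∃ ε : ℝ, 0 < ε ∧ ε ≤ 1 ∧ ∀ s, ε < g s := by
  rcases Nat.eq_zero_or_pos p with hp | hp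
  · subst hp; exact ⟨1/2, by norm_num, by norm_num, fun s => s.elim0⟩
  · have : Nonempty (Fin p) := Fin.pos_iff_nonempty.mp hp
    set μ := Finset.univ.inf' Finset.univ_nonempty g with hμ
    have hμpos : 0 < μ := by
      rw [hμ, Finset.lt_inf'_iff]
      exact fun s _ => hg s
    refine ⟨min (1/2) (μ/2), by positivity, ?_, fun s => ?_⟩
    · calc min (1/2) (μ/2) ≤ 1/2 := min_le_left _ _
        _ ≤ 1 := by norm_num
    · calc min (1/2) (μ/2) ≤ μ/2 := min_le_right _ _
        _ < μ := by linarith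
        _ ≤ g s := Finset.inf'_le _ (Finset.mem_univ s)

theorem minkowski_bounded_gap (n p : ℕ) (hpn : p < n)
    (f : Fin p → ((Fin n → ℝ) →ₗ[ℝ] ℝ)) (δ : Fin p → ℝ) (hδ : ∀ s, 0 < δ s)
    (N : ℕ) (hN : 0 < N) :
    ∃ K : ℕ → (Fin n → ℤ),
      (∀ l, K l ≠ 0) ∧
      (∀ l s, |f s (fun i => ((K l i : ℝ)))| < δ s) ∧
      (∀ l i, (N : ℤ) ∣ K l i) ∧
      Tendsto (fun l => ‖(fun i => ((K l i : ℝ)) : Fin n → ℝ)‖) atTop atTop ∧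
      ∃ C : ℝ, ∀ l, ‖(fun i => ((K (l+1) i - K l i : ℤ) : ℝ) : Fin n → ℝ)‖ ≤ C := by
  -- a unit vector in the common kernel
  obtain ⟨v₀, hv₀, hker₀⟩ := mbg_kernel_vec n p hpn f
  set u : Fin n → ℝ := ‖v₀‖⁻¹ • v₀ with hu
  have hv₀n : (0:ℝ) < ‖v₀‖ := norm_pos_iff.mpr hv₀
  have hunorm : ‖u‖ = 1 := by
    rw [hu, norm_smul, norm_inv, norm_norm, inv_mul_cancel₀ (ne_of_gt hv₀n)]
  have hkeru : ∀ s, f s u = 0 := fun s => by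
    rw [hu, map_smul, hker₀ s, smul_zero]
  -- the coefficient bound for each form
  set A : Fin p → ℝ := fun s => ∑ i, |f s (Pi.single i 1 : Fin n → ℝ)| with hA
  have hAnn : ∀ s, 0 ≤ A s := fun s => Finset.sum_nonneg fun i _ => abs_nonneg _
  -- choose ε
  obtain ⟨ε, hε, hε1, hεδ⟩ := mbg_eps p (fun s => δ s / (N * (A s + 1)))
    (fun s => by have := hδ s; have := hAnn s; positivity)
  have hεδ' : ∀ s, (N:ℝ) * (A s) * ε < δ s := by
    intro s
    have h1 := hεδ s
    have h2 : (0:ℝ) < (N:ℝ) * (A s + 1) := by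
      have := hAnn s; have : (0:ℝ) < (N:ℝ) := by exact_mod_cast hN
      have := hAnn s; positivity
    rw [lt_div_iff₀ h2] at h1
    nlinarith [hAnn s, hε.le, (show (0:ℝ) < (N:ℝ) by exact_mod_cast hN)]
  -- syndeticity
  obtain ⟨R, hR1, hRsyn⟩ := mbg_syndetic n u ε hε
  -- the sequence
  have Hl : ∀ l : ℕ, ∃ t : ℝ, ∃ m : Fin n → ℤ,
      ((l:ℝ)+1)*(R+1) ≤ t ∧ t ≤ ((l:ℝ)+1)*(R+1) + R ∧
      ‖(fun i => t * u i - (m i : ℝ) : Fin n → ℝ)‖ < ε := by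
    intro l
    exact hRsyn (((l:ℝ)+1)*(R+1)) (by positivity)
  choose t m ht1 ht2 hm using Hl
  -- shared facts
  set rm : ℕ → (Fin n → ℝ) := fun l => (fun i => (m l i : ℝ)) with hrmdef
  have htlb : ∀ l : ℕ, (l:ℝ) + 2 ≤ t l := by
    intro l
    calc (l:ℝ) + 2 ≤ ((l:ℝ)+1)*(R+1) := by nlinarith [Nat.cast_nonneg (α := ℝ) l]
      _ ≤ t l := ht1 l
  have htn : ∀ l : ℕ, ‖(fun i => t l * u i : Fin n → ℝ)‖ = t l := by
    intro l
    have h : (fun i => t l * u i : Fin n → ℝ) = t l • u := by funext i; simp [smul_eq_mul]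
    rw [h, norm_smul, hunorm, mul_one, Real.norm_eq_abs,
      abs_of_nonneg (by linarith [htlb l, Nat.cast_nonneg (α := ℝ) l])]
  have hmlow : ∀ l : ℕ, (l:ℝ) + 1 ≤ ‖rm l‖ := by
    intro l
    have h2 := norm_sub_norm_le (fun i => t l * u i : Fin n → ℝ) (rm l)
    have h3 : (fun i => t l * u i : Fin n → ℝ) - rm l
        = (fun i => t l * u i - (m l i : ℝ) : Fin n → ℝ) := by
      funext i; simp [hrmdef]
    rw [h3, htn l] at h2
    have := hm l
    linarith [htlb l]
  refine ⟨fun l i => (N:ℤ) * m l i, ?_, ?_, fun l i => ⟨m l i, rfl⟩, ?_, ?_⟩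
  -- nonzero
  · intro l hK
    have h0 : rm l = 0 := by
      funext i
      have := congrFun hK i
      simp only [Pi.zero_apply, mul_eq_zero] at this
      rcases this with h | h
      · exact absurd h (by positivity)
      · simp [hrmdef, h]
    have hl := hmlow l
    rw [h0, norm_zero] at hl
    linarith [Nat.cast_nonneg (α := ℝ) l]
  -- inequalities
  · intro l s
    have hKrm : (fun i => (((N:ℤ) * m l i : ℤ) : ℝ) : Fin n → ℝ) = (N:ℝ) • rm l := by
      funext i; push_cast; simp [hrmdef, mul_comm]
    rw [hKrm, map_smul, smul_eq_mul, abs_mul]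
    have hfz : f s (rm l) = f s (rm l - t l • u) := by
      rw [map_sub, map_smul, hkeru s, smul_zero, sub_zero]
    have hb := mbg_form_bound n (f s) (rm l - t l • u)
    have hnn : ‖rm l - t l • u‖ = ‖(fun i => t l * u i - (m l i : ℝ) : Fin n → ℝ)‖ := by
      rw [← norm_neg]
      congr 1
      funext i
      simp [hrmdef, smul_eq_mul]
    rw [hnn] at hb
    have hAs := hAnn s
    have hfb : |f s (rm l)| ≤ A s * ε := by
      rw [hfz]
      calc |f s (rm l - t l • u)| ≤ A s * ‖(fun i => t l * u i - (m l i : ℝ) : Fin n → ℝ)‖ := hb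
        _ ≤ A s * ε := mul_le_mul_of_nonneg_left (hm l).le hAs
    have hNpos : (0:ℝ) < N := by exact_mod_cast hN
    calc |(N:ℝ)| * |f s (rm l)| = (N:ℝ) * |f s (rm l)| := by rw [abs_of_pos hNpos]
      _ ≤ (N:ℝ) * (A s * ε) := mul_le_mul_of_nonneg_left hfb hNpos.le
      _ = (N:ℝ) * A s * ε := by ring
      _ < δ s := hεδ' s
  -- tendsto
  · refine tendsto_atTop_mono (f := fun l : ℕ => (l:ℝ)) ?_ tendsto_natCast_atTop_atTop
    intro l
    have hKrm : (fun i => (((N:ℤ) * m l i : ℤ) : ℝ) : Fin n → ℝ) = (N:ℝ) • rm l := by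
      funext i; push_cast; simp [hrmdef, mul_comm]
    rw [hKrm, norm_smul, Real.norm_natCast]
    have h1 : (1:ℝ) ≤ (N:ℝ) := by exact_mod_cast hN
    nlinarith [hmlow l, Nat.cast_nonneg (α := ℝ) l]
  -- bounded gaps
  · refine ⟨(N:ℝ) * (2 + (2*R+1)), ?_⟩
    intro l
    have hKrm : (fun i => (((N:ℤ) * m (l+1) i - (N:ℤ) * m l i : ℤ) : ℝ) : Fin n → ℝ)
        = (N:ℝ) • (rm (l+1) - rm l) := by
      funext i; push_cast; simp [hrmdef]; ring
    rw [hKrm, norm_smul, Real.norm_natCast]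
    have hdiff : rm (l+1) - rm l =
        (fun i => (m (l+1) i : ℝ) - t (l+1) * u i : Fin n → ℝ)
        + (fun i => (t (l+1) - t l) * u i : Fin n → ℝ)
        + (fun i => t l * u i - (m l i : ℝ) : Fin n → ℝ) := by
      funext i; simp [hrmdef]; ring
    have h1 : ‖(fun i => (m (l+1) i : ℝ) - t (l+1) * u i : Fin n → ℝ)‖ < ε := by
      rw [← norm_neg]
      have : -(fun i => (m (l+1) i : ℝ) - t (l+1) * u i : Fin n → ℝ)
          = (fun i => t (l+1) * u i - (m (l+1) i : ℝ) : Fin n → ℝ) := by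
        funext i; simp
      rw [this]; exact hm (l+1)
    have h2 : ‖(fun i => (t (l+1) - t l) * u i : Fin n → ℝ)‖ ≤ 2*R+1 := by
      have he : (fun i => (t (l+1) - t l) * u i : Fin n → ℝ) = (t (l+1) - t l) • u := by
        funext i; simp [smul_eq_mul]
      rw [he, norm_smul, hunorm, mul_one, Real.norm_eq_abs]
      have ha := ht1 (l+1)
      have hb := ht2 (l+1)
      have hc := ht1 l
      have hd := ht2 l
      push_cast at ha hb hc hd
      rw [abs_le]
      constructor <;> nlinarith
    have h3 := hm l
    have htri := norm_add₃_le (E := Fin n → ℝ)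
      (a := (fun i => (m (l+1) i : ℝ) - t (l+1) * u i : Fin n → ℝ))
      (b := (fun i => (t (l+1) - t l) * u i : Fin n → ℝ))
      (c := (fun i => t l * u i - (m l i : ℝ) : Fin n → ℝ))
    rw [← hdiff] at htri
    have hN1 : (0:ℝ) ≤ (N:ℝ) := Nat.cast_nonneg N
    have : ‖rm (l+1) - rm l‖ ≤ 2 + (2*R+1) := by linarith [hε1]
    nlinarith
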